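/- The determinant h(z) = det of the 3×3 matrix with entries z₁,…,z₉ (row by row), viewed as a holomorphic cubic form on ℂ⁹, satisfies Σᵢⱼ conj(∂²h/∂zᵢ∂zⱼ)(∂h/∂zᵢ)(∂h/∂zⱼ) = 2(Σᵢ₌₁⁹ |zᵢ|²)·h(z) for all z ∈ ℂ⁹. -/

import Mathlib

open Complex



noncomputable def f9 : (Fin 9 → ℂ) → ℂ := fun z' =>
  z' 0 * z' 4 * z' 8 - z' 0 * z' 5 * z' 7 - z' 1 * z' 3 * z' 8
    + z' 1 * z' 5 * z' 6 + z' 2 * z' 3 * z' 7 - z' 2 * z' 4 * z' 6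

lemma coordHas (i : Fin 9) (w : Fin 9 → ℂ) :
    HasFDerivAt (fun z' : Fin 9 → ℂ => z' i) ((ContinuousLinearMap.proj i : (Fin 9 → ℂ) →L[ℂ] ℂ)) w :=
  (ContinuousLinearMap.proj i : (Fin 9 → ℂ) →L[ℂ] ℂ).hasFDerivAt

lemma fderiv_f9_apply (w v : Fin 9 → ℂ) :
    fderiv ℂ f9 w v =
      v 0 * w 4 * w 8 + w 0 * v 4 * w 8 + w 0 * w 4 * v 8
      - (v 0 * w 5 * w 7 + w 0 * v 5 * w 7 + w 0 * w 5 * v 7)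
      - (v 1 * w 3 * w 8 + w 1 * v 3 * w 8 + w 1 * w 3 * v 8)
      + (v 1 * w 5 * w 6 + w 1 * v 5 * w 6 + w 1 * w 5 * v 6)
      + (v 2 * w 3 * w 7 + w 2 * v 3 * w 7 + w 2 * w 3 * v 7)
      - (v 2 * w 4 * w 6 + w 2 * v 4 * w 6 + w 2 * w 4 * v 6) := by
  have H : HasFDerivAt f9 _ w :=
    ((((((((coordHas 0 w).mul (coordHas 4 w)).mul (coordHas 8 w)).sub
      (((coordHas 0 w).mul (coordHas 5 w)).mul (coordHas 7 w))).sub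
      (((coordHas 1 w).mul (coordHas 3 w)).mul (coordHas 8 w))).add
      (((coordHas 1 w).mul (coordHas 5 w)).mul (coordHas 6 w))).add
      (((coordHas 2 w).mul (coordHas 3 w)).mul (coordHas 7 w))).sub
      (((coordHas 2 w).mul (coordHas 4 w)).mul (coordHas 6 w)))
  rw [H.fderiv]
  simp [ContinuousLinearMap.proj_apply, smul_eq_mul]
  ring

lemma quad9 (a b c d : Fin 9) (w v : Fin 9 → ℂ) :
    fderiv ℂ (fun z' : Fin 9 → ℂ => z' a * z' b - z' c * z' d) w v
      = v a * w b + w a * v b - (v c * w d + w c * v d) := by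
  have H : HasFDerivAt (fun z' : Fin 9 → ℂ => z' a * z' b - z' c * z' d) _ w :=
    ((coordHas a w).mul (coordHas b w)).sub ((coordHas c w).mul (coordHas d w))
  rw [H.fderiv]
  simp [smul_eq_mul]
  ring

@[simp] lemma cons_val_five' {α : Type*} {m : ℕ} (x : α) (u : Fin (m+5) → α) :
    Matrix.vecCons x u 5 = Matrix.vecHead (Matrix.vecTail (Matrix.vecTail (Matrix.vecTail (Matrix.vecTail u)))) := rfl

@[simp] lemma cons_val_six' {α : Type*} {m : ℕ} (x : α) (u : Fin (m+6) → α) :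
    Matrix.vecCons x u 6 = Matrix.vecHead (Matrix.vecTail (Matrix.vecTail (Matrix.vecTail (Matrix.vecTail (Matrix.vecTail u))))) := rfl

@[simp] lemma cons_val_seven' {α : Type*} {m : ℕ} (x : α) (u : Fin (m+7) → α) :
    Matrix.vecCons x u 7 = Matrix.vecHead (Matrix.vecTail (Matrix.vecTail (Matrix.vecTail (Matrix.vecTail (Matrix.vecTail (Matrix.vecTail u)))))) := rfl

@[simp] lemma cons_val_eight' {α : Type*} {m : ℕ} (x : α) (u : Fin (m+8) → α) :
    Matrix.vecCons x u 8 = Matrix.vecHead (Matrix.vecTail (Matrix.vecTail (Matrix.vecTail (Matrix.vecTail (Matrix.vecTail (Matrix.vecTail (Matrix.vecTail u))))))) := rfl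

def q9 : Fin 9 → Fin 4 → Fin 9 :=
  ![![4,8,5,7], ![5,6,3,8], ![3,7,4,6], ![2,7,1,8], ![0,8,2,6],
    ![1,6,0,7], ![1,5,2,4], ![2,3,0,5], ![0,4,1,3]]

lemma gradA (w : Fin 9 → ℂ) (i : Fin 9) :
    fderiv ℂ f9 w (Pi.single i 1) =
      w (q9 i 0) * w (q9 i 1) - w (q9 i 2) * w (q9 i 3) := by
  fin_cases i <;> rw [fderiv_f9_apply] <;> simp [q9, Pi.single_apply] <;> ring

lemma hessA (w v : Fin 9 → ℂ) (i : Fin 9) :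
    fderiv ℂ (fun z' => fderiv ℂ f9 z' (Pi.single i 1)) w v =
      v (q9 i 0) * w (q9 i 1) + w (q9 i 0) * v (q9 i 1)
        - (v (q9 i 2) * w (q9 i 3) + w (q9 i 2) * v (q9 i 3)) := by
  have h1 : (fun z' => fderiv ℂ f9 z' (Pi.single i 1)) =
      fun z' : Fin 9 → ℂ => z' (q9 i 0) * z' (q9 i 1) - z' (q9 i 2) * z' (q9 i 3) :=
    funext fun w' => gradA w' i
  rw [h1, quad9]

@[simp] lemma q9_0_0 : q9 0 0 = 4 := rfl
@[simp] lemma q9_0_1 : q9 0 1 = 8 := rfl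
@[simp] lemma q9_0_2 : q9 0 2 = 5 := rfl
@[simp] lemma q9_0_3 : q9 0 3 = 7 := rfl
@[simp] lemma q9_1_0 : q9 1 0 = 5 := rfl
@[simp] lemma q9_1_1 : q9 1 1 = 6 := rfl
@[simp] lemma q9_1_2 : q9 1 2 = 3 := rfl
@[simp] lemma q9_1_3 : q9 1 3 = 8 := rfl
@[simp] lemma q9_2_0 : q9 2 0 = 3 := rfl
@[simp] lemma q9_2_1 : q9 2 1 = 7 := rfl
@[simp] lemma q9_2_2 : q9 2 2 = 4 := rfl
@[simp] lemma q9_2_3 : q9 2 3 = 6 := rfl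
@[simp] lemma q9_3_0 : q9 3 0 = 2 := rfl
@[simp] lemma q9_3_1 : q9 3 1 = 7 := rfl
@[simp] lemma q9_3_2 : q9 3 2 = 1 := rfl
@[simp] lemma q9_3_3 : q9 3 3 = 8 := rfl
@[simp] lemma q9_4_0 : q9 4 0 = 0 := rfl
@[simp] lemma q9_4_1 : q9 4 1 = 8 := rfl
@[simp] lemma q9_4_2 : q9 4 2 = 2 := rfl
@[simp] lemma q9_4_3 : q9 4 3 = 6 := rfl
@[simp] lemma q9_5_0 : q9 5 0 = 1 := rfl
@[simp] lemma q9_5_1 : q9 5 1 = 6 := rfl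
@[simp] lemma q9_5_2 : q9 5 2 = 0 := rfl
@[simp] lemma q9_5_3 : q9 5 3 = 7 := rfl
@[simp] lemma q9_6_0 : q9 6 0 = 1 := rfl
@[simp] lemma q9_6_1 : q9 6 1 = 5 := rfl
@[simp] lemma q9_6_2 : q9 6 2 = 2 := rfl
@[simp] lemma q9_6_3 : q9 6 3 = 4 := rfl
@[simp] lemma q9_7_0 : q9 7 0 = 2 := rfl
@[simp] lemma q9_7_1 : q9 7 1 = 3 := rfl
@[simp] lemma q9_7_2 : q9 7 2 = 0 := rfl
@[simp] lemma q9_7_3 : q9 7 3 = 5 := rfl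
@[simp] lemma q9_8_0 : q9 8 0 = 0 := rfl
@[simp] lemma q9_8_1 : q9 8 1 = 4 := rfl
@[simp] lemma q9_8_2 : q9 8 2 = 1 := rfl
@[simp] lemma q9_8_3 : q9 8 3 = 3 := rfl


lemma sum_univ_nine' {M : Type*} [AddCommMonoid M] (f : Fin 9 → M) :
    ∑ i, f i = f 0 + f 1 + f 2 + f 3 + f 4 + f 5 + f 6 + f 7 + f 8 := by
  rw [Fin.sum_univ_castSucc, Fin.sum_univ_eight]; rfl



set_option maxHeartbeats 2000000 in
/-- The 3×3 determinant `h z = z₁z₅z₉ − z₁z₆z₈ − z₂z₄z₉ + z₂z₆z₇ + z₃z₄z₈ − z₃z₅z₇`,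
a holomorphic cubic form on ℂ⁹, satisfies
`Σᵢⱼ conj(∂²h/∂zᵢ∂zⱼ) (∂h/∂zᵢ) (∂h/∂zⱼ) = 2 (Σᵢ |zᵢ|²) h z` for all `z ∈ ℂ⁹`. -/
theorem stmt_9 :
    ∀ z : Fin 9 → ℂ,
      (let h : (Fin 9 → ℂ) → ℂ := fun z' =>
          z' 0 * z' 4 * z' 8 - z' 0 * z' 5 * z' 7 - z' 1 * z' 3 * z' 8
            + z' 1 * z' 5 * z' 6 + z' 2 * z' 3 * z' 7 - z' 2 * z' 4 * z' 6
       ∑ i : Fin 9, ∑ j : Fin 9,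
          (starRingEnd ℂ) (fderiv ℂ (fun z' => fderiv ℂ h z' (Pi.single i 1)) z (Pi.single j 1))
            * fderiv ℂ h z (Pi.single i 1) * fderiv ℂ h z (Pi.single j 1)
        = ((2 * ∑ i : Fin 9, ‖z i‖ ^ 2 : ℝ) : ℂ) * h z) := by
  intro z
  show ∑ i : Fin 9, ∑ j : Fin 9,
          (starRingEnd ℂ) (fderiv ℂ (fun z' => fderiv ℂ f9 z' (Pi.single i 1)) z (Pi.single j 1))
            * fderiv ℂ f9 z (Pi.single i 1) * fderiv ℂ f9 z (Pi.single j 1)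
        = ((2 * ∑ i : Fin 9, ‖z i‖ ^ 2 : ℝ) : ℂ) * f9 z
  simp only [hessA, gradA, quad9]
  rw [sum_univ_nine']
  simp only [sum_univ_nine']
  simp only [q9_0_0,q9_0_1,q9_0_2,q9_0_3,q9_1_0,q9_1_1,q9_1_2,q9_1_3,q9_2_0,q9_2_1,q9_2_2,q9_2_3,q9_3_0,q9_3_1,q9_3_2,q9_3_3,q9_4_0,q9_4_1,q9_4_2,q9_4_3,q9_5_0,q9_5_1,q9_5_2,q9_5_3,q9_6_0,q9_6_1,q9_6_2,q9_6_3,q9_7_0,q9_7_1,q9_7_2,q9_7_3,q9_8_0,q9_8_1,q9_8_2,q9_8_3]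
  simp only [Pi.single_apply]
  simp (config := { decide := true }) only [ite_true, ite_false, if_true, if_false, reduceIte, map_add, map_sub, map_mul, map_zero, f9]
  simp only [Complex.ofReal_mul, Complex.ofReal_ofNat, Complex.ofReal_sum, Complex.ofReal_add, Complex.sq_norm,
    ← Complex.mul_conj, map_add, map_sub, map_mul, map_zero, map_one]
  ring
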